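/- Let d be a positive integer and let W₁, …, W_f be a set of mutually quasi-unbiased weighing matrices for parameters (d, 2, 4, 1), i.e., each W_i is a weighing matrix of order d and weight 2 and for i ≠ j the matrix W_i·W_jᵀ is a weighing matrix of weight 4. Then f ≤ d − 1. -/

import Mathlib

open Matrix Finset

/-- `W` is a weighing matrix of order `d` and weight `k`: a `d × d` real matrix with all
entries in `{-1, 0, 1}` such that `W * Wᵀ = k • 1`. -/
def IsWeighing {d : ℕ} (k : ℝ) (W : Matrix (Fin d) (Fin d) ℝ) : Prop :=
  (∀ i j, W i j = -1 ∨ W i j = 0 ∨ W i j = 1) ∧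
    W * Wᵀ = k • (1 : Matrix (Fin d) (Fin d) ℝ)

/-- A family of mutually unbiased weighing matrices of order `d` and weight `k`:
each member is a weighing matrix of weight `k`, and for distinct members
`(1/√k) • (Wᵢ * Wⱼᵀ)` is again a weighing matrix of weight `k`. -/
def MUWM {d f : ℕ} (k : ℝ) (W : Fin f → Matrix (Fin d) (Fin d) ℝ) : Prop :=
  (∀ i, IsWeighing k (W i)) ∧
    ∀ i j, i ≠ j → IsWeighing k ((Real.sqrt k)⁻¹ • (W i * (W j)ᵀ))

/-- A family of mutually quasi-unbiased weighing matrices for parameters `(d, k, l, a)`: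
each member is a weighing matrix of weight `k`, and for distinct members
`(1/√a) • (Wᵢ * Wⱼᵀ)` is a weighing matrix of weight `l`. -/
def MQUWM {d f : ℕ} (k l a : ℝ) (W : Fin f → Matrix (Fin d) (Fin d) ℝ) : Prop :=
  (∀ i, IsWeighing k (W i)) ∧
    ∀ i j, i ≠ j → IsWeighing l ((Real.sqrt a)⁻¹ • (W i * (W j)ᵀ))

/-- A {-1,0,1}-vector with squared sum 2 has exactly two nonzero coordinates. -/
lemma two_support {d : ℕ} (v : Fin d → ℝ)
    (hv : ∀ c, v c = -1 ∨ v c = 0 ∨ v c = 1)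
    (h2 : ∑ c, v c * v c = 2) :
    ∃ x y, x ≠ y ∧ v x ≠ 0 ∧ v y ≠ 0 ∧ ∀ c, c ≠ x → c ≠ y → v c = 0 := by
  classical
  have hsum : ∑ c, v c * v c = ∑ c, (if v c ≠ 0 then (1:ℝ) else 0) := by
    refine Finset.sum_congr rfl fun c _ => ?_
    rcases hv c with h | h | h <;> simp [h]
  rw [hsum, Finset.sum_boole] at h2
  have hcard : ({c | v c ≠ 0} : Finset (Fin d)).card = 2 := by
    exact_mod_cast h2
  obtain ⟨x, y, hxy, hset⟩ := Finset.card_eq_two.mp hcard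
  refine ⟨x, y, hxy, ?_, ?_, ?_⟩
  · have : x ∈ ({c | v c ≠ 0} : Finset (Fin d)) := by rw [hset]; simp
    simpa using this
  · have : y ∈ ({c | v c ≠ 0} : Finset (Fin d)) := by rw [hset]; simp
    simpa using this
  · intro c hcx hcy
    by_contra hc
    have : c ∈ ({c | v c ≠ 0} : Finset (Fin d)) := by simp [hc]
    rw [hset] at this
    simp [hcx, hcy] at this

/-- Support version anchored at a known nonzero coordinate. -/
lemma two_support_at {d : ℕ} (v : Fin d → ℝ)
    (hv : ∀ c, v c = -1 ∨ v c = 0 ∨ v c = 1)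
    (h2 : ∑ c, v c * v c = 2) {a : Fin d} (ha : v a ≠ 0) :
    ∃ b, b ≠ a ∧ v b ≠ 0 ∧ ∀ c, c ≠ a → c ≠ b → v c = 0 := by
  obtain ⟨x, y, hxy, hx, hy, hz⟩ := two_support v hv h2
  rcases eq_or_ne a x with rfl | hax
  · exact ⟨y, hxy.symm, hy, fun c h1 h2 => hz c h1 h2⟩
  · rcases eq_or_ne a y with rfl | hay
    · exact ⟨x, hxy, hx, fun c h1 h2 => hz c h2 h1⟩
    · exact absurd (hz a hax hay) ha

/-- Sum over two-point support. -/
lemma sum_two_support {d : ℕ} {a b : Fin d} (hab : a ≠ b) (u w : Fin d → ℝ)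
    (hu : ∀ c, c ≠ a → c ≠ b → u c = 0) :
    ∑ c, u c * w c = u a * w a + u b * w b := by
  classical
  rw [← Finset.sum_subset (Finset.subset_univ ({a, b} : Finset (Fin d)))
      (fun c _ hc => ?_), Finset.sum_pair hab]
  have h1 : c ≠ a := fun h => hc (by simp [h])
  have h2 : c ≠ b := fun h => hc (by simp [h])
  simp [hu c h1 h2]

/-- From `W * Wᵀ = 2•1`, also `Wᵀ * W = 2•1`. -/
lemma transpose_mul_self {d : ℕ} {W : Matrix (Fin d) (Fin d) ℝ}
    (hO : W * Wᵀ = (2:ℝ) • (1 : Matrix (Fin d) (Fin d) ℝ)) :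
    Wᵀ * W = (2:ℝ) • (1 : Matrix (Fin d) (Fin d) ℝ) := by
  have h1 : W * ((2:ℝ)⁻¹ • Wᵀ) = 1 := by
    rw [Matrix.mul_smul, hO, smul_smul]; norm_num
  have h2 : ((2:ℝ)⁻¹ • Wᵀ) * W = 1 := mul_eq_one_comm.mp h1
  rw [Matrix.smul_mul] at h2
  have := congrArg (fun M => (2:ℝ) • M) h2
  simpa [smul_smul] using this

/-- Structure of a weight-2 weighing matrix around a column `a`. -/
lemma pair_struct {d : ℕ} {W : Matrix (Fin d) (Fin d) ℝ}
    (hE : ∀ i j, W i j = -1 ∨ W i j = 0 ∨ W i j = 1)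
    (hO : W * Wᵀ = (2:ℝ) • (1 : Matrix (Fin d) (Fin d) ℝ)) (a : Fin d) :
    ∃ b r1 r2, b ≠ a ∧ r1 ≠ r2 ∧
      (W r1 a ≠ 0 ∧ W r1 b ≠ 0 ∧ ∀ c, c ≠ a → c ≠ b → W r1 c = 0) ∧
      (W r2 a ≠ 0 ∧ W r2 b ≠ 0 ∧ ∀ c, c ≠ a → c ≠ b → W r2 c = 0) := by
  classical
  have hT := transpose_mul_self hO
  -- the column a has exactly two nonzero entries, r1 and r2
  have hcol : ∑ c, W c a * W c a = 2 := by
    have := congrFun (congrFun hT a) a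
    simpa [Matrix.mul_apply, Matrix.transpose_apply, Matrix.one_apply] using this
  obtain ⟨r1, r2, hr, hr1, hr2, _⟩ :=
    two_support (fun c => W c a) (fun c => hE c a) hcol
  -- row sums
  have hrow : ∀ r, ∑ c, W r c * W r c = 2 := by
    intro r
    have := congrFun (congrFun hO r) r
    simpa [Matrix.mul_apply, Matrix.transpose_apply, Matrix.one_apply] using this
  obtain ⟨b1, hb1a, hb1, hz1⟩ := two_support_at (W r1) (hE r1) (hrow r1) hr1
  obtain ⟨b2, hb2a, hb2, hz2⟩ := two_support_at (W r2) (hE r2) (hrow r2) hr2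
  -- rows r1 and r2 are orthogonal, forcing b1 = b2
  have horth : ∑ c, W r1 c * W r2 c = 0 := by
    have := congrFun (congrFun hO r1) r2
    simpa [Matrix.mul_apply, Matrix.transpose_apply, Matrix.one_apply, hr] using this
  have hb12 : b1 = b2 := by
    by_contra hne
    have hsingle : ∑ c, W r1 c * W r2 c = W r1 a * W r2 a := by
      refine Finset.sum_eq_single a (fun c _ hca => ?_) (by simp)
      rcases eq_or_ne c b1 with rfl | hcb1
      · rw [hz2 c hca (Ne.symm (fun h => hne h.symm)), mul_zero]
      · rw [hz1 c hca hcb1, zero_mul]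
    rw [hsingle] at horth
    exact (mul_ne_zero hr1 hr2) horth
  subst hb12
  exact ⟨b1, r1, r2, fun h => hb1a h, hr, ⟨hr1, hb1, hz1⟩, ⟨hr2, hb2, hz2⟩⟩

lemma pm_sum_zero {x y : ℝ} (hx : x = -1 ∨ x = 1) (hy : y = -1 ∨ y = 1)
    (hs : x + y = -1 ∨ x + y = 0 ∨ x + y = 1) : x + y = 0 := by
  rcases hx with rfl | rfl <;> rcases hy with rfl | rfl <;> revert hs <;> norm_num

lemma pm_of {z : ℝ} (hz : z = -1 ∨ z = 0 ∨ z = 1) (h0 : z ≠ 0) : z = -1 ∨ z = 1 := by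
  tauto

/-- any set of mutually quasi-unbiased weighing matrices for parameters
`(d, 2, 4, 1)` has at most `d - 1` members. -/
theorem stmt7 (d f : ℕ) (hd : 0 < d)
    (W : Fin f → Matrix (Fin d) (Fin d) ℝ)
    (hW : MQUWM (2 : ℝ) (4 : ℝ) (1 : ℝ) W) :
    f ≤ d - 1 := by
  classical
  obtain ⟨hWk, hWc⟩ := hW
  set a₀ : Fin d := ⟨0, hd⟩ with ha₀
  choose b r1 r2 hba hr h1 h2 using fun i => pair_struct (hWk i).1 (hWk i).2 a₀
  -- cross entries are in {-1,0,1}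
  have hcross : ∀ i j, i ≠ j → ∀ r s, (W i * (W j)ᵀ) r s = -1 ∨
      (W i * (W j)ᵀ) r s = 0 ∨ (W i * (W j)ᵀ) r s = 1 := by
    intro i j hij r s
    have := (hWc i j hij).1 r s
    simpa [Real.sqrt_one] using this
  -- key inner-product identity on a common pair {a₀, β}
  have hip : ∀ i j, b i = b j → ∀ r s, (∀ c, c ≠ a₀ → c ≠ b i → W i r c = 0) →
      (∀ c, c ≠ a₀ → c ≠ b j → W j s c = 0) →
      (W i * (W j)ᵀ) r s = W i r a₀ * W j s a₀ + W i r (b i) * W j s (b i) := by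
    intro i j hbij r s hri hsj
    rw [Matrix.mul_apply]
    simp only [Matrix.transpose_apply]
    exact sum_two_support (Ne.symm (hba i)) _ _ hri
  -- injectivity of i ↦ b i
  have hinj : Function.Injective fun i => (⟨b i, hba i⟩ : {x : Fin d // x ≠ a₀}) := by
    intro i j hij
    by_contra hne
    have hne' : i ≠ j := fun h => hne (by rw [h])
    have hbij : b i = b j := congrArg Subtype.val hij
    -- entries are ±1
    have ps1 := pm_of ((hWk i).1 (r1 i) a₀) (h1 i).1
    have pt1 := pm_of ((hWk i).1 (r1 i) (b i)) (h1 i).2.1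
    have ps2 := pm_of ((hWk i).1 (r2 i) a₀) (h2 i).1
    have pt2 := pm_of ((hWk i).1 (r2 i) (b i)) (h2 i).2.1
    have pσ := pm_of ((hWk j).1 (r1 j) a₀) (h1 j).1
    have pτ := pm_of ((hWk j).1 (r1 j) (b i)) (by rw [hbij]; exact (h1 j).2.1)
    -- E1 : orthogonality of row r1 i of W i with row r1 j of W j
    have E1 : W i (r1 i) a₀ * W j (r1 j) a₀ + W i (r1 i) (b i) * W j (r1 j) (b i) = 0 := by
      have heq := hip i j hbij (r1 i) (r1 j) (h1 i).2.2 (h1 j).2.2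
      have hmem := hcross i j hne' (r1 i) (r1 j)
      rw [heq] at hmem
      exact pm_sum_zero (by rcases ps1 with h | h <;> rcases pσ with h' | h' <;>
        rw [h, h'] <;> norm_num)
        (by rcases pt1 with h | h <;> rcases pτ with h' | h' <;> rw [h, h'] <;> norm_num) hmem
    have E2 : W i (r2 i) a₀ * W j (r1 j) a₀ + W i (r2 i) (b i) * W j (r1 j) (b i) = 0 := by
      have heq := hip i j hbij (r2 i) (r1 j) (h2 i).2.2 (h1 j).2.2
      have hmem := hcross i j hne' (r2 i) (r1 j)
      rw [heq] at hmem
      exact pm_sum_zero (by rcases ps2 with h | h <;> rcases pσ with h' | h' <;>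
        rw [h, h'] <;> norm_num)
        (by rcases pt2 with h | h <;> rcases pτ with h' | h' <;> rw [h, h'] <;> norm_num) hmem
    -- E3 : orthogonality of the two rows of W i
    have E3 : W i (r1 i) a₀ * W i (r2 i) a₀ + W i (r1 i) (b i) * W i (r2 i) (b i) = 0 := by
      have horth : ∑ c, W i (r1 i) c * W i (r2 i) c = 0 := by
        have := congrFun (congrFun (hWk i).2 (r1 i)) (r2 i)
        simpa [Matrix.mul_apply, Matrix.transpose_apply, Matrix.one_apply, hr i] using this
      rw [sum_two_support (Ne.symm (hba i)) _ _ (h1 i).2.2] at horth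
      exact horth
    rcases ps1 with hA | hA <;> rcases pt1 with hB | hB <;> rcases ps2 with hC | hC <;>
      rcases pt2 with hD | hD <;> rcases pσ with hE | hE <;> rcases pτ with hF | hF <;>
      rw [hA, hB, hE, hF] at E1 <;> rw [hC, hD, hE, hF] at E2 <;>
      rw [hA, hB, hC, hD] at E3 <;> revert E1 E2 E3 <;> norm_num
  have hcard := Fintype.card_le_of_injective _ hinj
  simp only [Fintype.card_fin] at hcard
  have : Fintype.card {x : Fin d // x ≠ a₀} = d - 1 := by
    have := Fintype.card_subtype_compl (fun x : Fin d => x = a₀)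
    simpa [Fintype.card_subtype_eq, ne_eq] using this
  omega
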